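/- arXiv:2412.11162 — 2 statements merged into one kernel-verified Lean document; each statement's English description precedes it below -/
import Mathlib

section
/- All derivatives of σ₁ up to order p − 1 vanish at ρ = a₁: for 1 ≤ k ≤ p − 1, σ₁^{(k)}(a₁) = 0, so that σ₁ extended by 0 for ρ < a₁ is a C^{p−1} function. -/
open Filter Asymptotics
open scoped ContDiff

/-- `t^p + (1-t)^p > 0` for every real `t` and `p ≥ 1`. -/
lemma aux_den_pos (p : ℕ) (hp : 1 ≤ p) (t : ℝ) : 0 < t ^ p + (1 - t) ^ p := by
  rcases le_or_gt t (1/2) with h | h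
  · rcases eq_or_lt_of_le h with rfl | h
    · have : (0:ℝ) < (1/2:ℝ) ^ p := by positivity
      have : (1:ℝ) - 1/2 = 1/2 := by norm_num
      rw [this]; linarith [pow_pos (show (0:ℝ) < 1/2 by norm_num) p]
    · have habs : |t| < 1 - t := by
        rw [abs_lt]; constructor <;> linarith
      have h1 : |t| ^ p < (1 - t) ^ p :=
        pow_lt_pow_left₀ habs (abs_nonneg t) (by omega)
      have h2 : -(t ^ p) ≤ |t| ^ p := by
        rw [← abs_pow]; exact neg_le_abs _
      linarith
  · have ht : 0 < t := by linarith
    have habs : |1 - t| ≤ t := by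
      rw [abs_le]; constructor <;> linarith
    rcases eq_or_lt_of_le habs with heq | hlt
    · exfalso
      rcases abs_cases (1 - t) with ⟨he, _⟩ | ⟨he, _⟩ <;> rw [he] at heq <;> linarith
    · have h1 : |1 - t| ^ p < t ^ p := pow_lt_pow_left₀ hlt (abs_nonneg _) (by omega)
      have h2 : -((1-t) ^ p) ≤ |1-t| ^ p := by rw [← abs_pow]; exact neg_le_abs _
      linarith

/-- derivative of `x ↦ (max x 0)^(n+2)` is `(n+2) (max x 0)^(n+1)` everywhere. -/
lemma aux_hasDerivAt_maxpow (n : ℕ) (x : ℝ) :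
    HasDerivAt (fun y : ℝ => max y 0 ^ (n + 2)) ((n + 2 : ℝ) * max x 0 ^ (n + 1)) x := by
  rcases lt_trichotomy x 0 with hx | hx | hx
  · have hmax : max x 0 = 0 := max_eq_right hx.le
    rw [hmax]
    have : ((n + 2 : ℝ)) * 0 ^ (n + 1) = 0 := by simp
    rw [this]
    refine (hasDerivAt_const x (0:ℝ)).congr_of_eventuallyEq ?_
    filter_upwards [Iio_mem_nhds hx] with y hy
    rw [max_eq_right (le_of_lt hy)]
    simp
  · subst hx
    have hmax : max (0:ℝ) 0 = 0 := by simp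
    rw [hmax]
    have : ((n + 2 : ℝ)) * 0 ^ (n + 1) = 0 := by simp
    rw [this]
    rw [hasDerivAt_iff_isLittleO]
    simp only [sub_zero, mul_zero, max_self, zero_pow, Nat.add_eq_zero, OfNat.ofNat_ne_zero,
      and_false, ne_eq, not_false_eq_true]
    rw [Asymptotics.isLittleO_iff]
    intro c hc
    filter_upwards [Metric.ball_mem_nhds (0:ℝ) (lt_min hc one_pos)] with y hy
    rw [Metric.mem_ball, Real.dist_eq, sub_zero] at hy
    have h1 : |max y 0| ≤ |y| := by
      rcases le_total y 0 with h | h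
      · rw [max_eq_right h]; simp [abs_nonneg]
      · rw [max_eq_left h]
    have h2 : ‖max y 0 ^ (n + 2) - y • (0:ℝ)‖ ≤ |y| ^ (n + 2) := by
      rw [smul_zero, sub_zero, norm_pow, Real.norm_eq_abs]
      exact pow_le_pow_left₀ (abs_nonneg _) h1 _
    calc ‖max y 0 ^ (n + 2) - y • (0:ℝ)‖ ≤ |y| ^ (n + 2) := h2
      _ = |y| ^ (n+1) * |y| := by ring
      _ ≤ c * ‖y‖ := by
          apply mul_le_mul _ le_rfl (abs_nonneg y) (le_of_lt hc)
          calc |y| ^ (n+1) ≤ |y| := by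
                apply pow_le_of_le_one (abs_nonneg _) _ (by omega)
                exact le_of_lt (lt_of_lt_of_le hy (min_le_right _ _))
            _ ≤ c := le_of_lt (lt_of_lt_of_le hy (min_le_left _ _))
  · have hmax : max x 0 = x := max_eq_left hx.le
    rw [hmax]
    have hp : HasDerivAt (fun y : ℝ => y ^ (n + 2)) ((n + 2 : ℝ) * x ^ (n + 1)) x := by
      have := hasDerivAt_pow (n + 2) x
      norm_num at this
      convert this using 1
    refine hp.congr_of_eventuallyEq ?_
    filter_upwards [Ioi_mem_nhds hx] with y hy
    rw [max_eq_left (le_of_lt hy)]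

lemma aux_contDiff_maxpow (n : ℕ) :
    ContDiff ℝ (n : ℕ) (fun x : ℝ => max x 0 ^ (n + 1)) := by
  induction n with
  | zero =>
    rw [show ((0:ℕ) : WithTop ℕ∞) = 0 from rfl, contDiff_zero]
    exact (continuous_id.max continuous_const).pow 1
  | succ m ih =>
    have hcast : ((m + 1 : ℕ) : WithTop ℕ∞) = (m : ℕ) + 1 := by push_cast; rfl
    rw [hcast, contDiff_succ_iff_deriv]
    refine ⟨fun x => (aux_hasDerivAt_maxpow m x).differentiableAt, by simp, ?_⟩
    have hderiv : deriv (fun x : ℝ => max x 0 ^ (m + 1 + 1)) =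
        fun x : ℝ => (m + 2 : ℝ) * max x 0 ^ (m + 1) := by
      funext x
      exact (aux_hasDerivAt_maxpow m x).deriv
    rw [hderiv]
    exact contDiff_const.mul ih

/-- If `h` is smooth, iterated derivatives of `(x-a)^n * h x` at `a` vanish up to order `n-1`. -/
lemma aux_vanish (a : ℝ) :
    ∀ (k n : ℕ), k < n → ∀ h : ℝ → ℝ, ContDiff ℝ ∞ h →
      iteratedDeriv k (fun x : ℝ => (x - a) ^ n * h x) a = 0 := by
  intro k
  induction k with
  | zero =>
    intro n hn h _
    rw [iteratedDeriv_zero]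
    simp [zero_pow (by omega : n ≠ 0)]
  | succ k ih =>
    intro n hn h hC
    obtain ⟨m, rfl⟩ : ∃ m, n = m + 1 := ⟨n - 1, by omega⟩
    rw [iteratedDeriv_succ']
    have hdiff : Differentiable ℝ h := hC.differentiable (by simp)
    have hd : ContDiff ℝ ∞ (deriv h) := (contDiff_infty_iff_deriv.mp hC).2
    have hderiv : deriv (fun x : ℝ => (x - a) ^ (m + 1) * h x) =
        fun x : ℝ => (x - a) ^ m * (((m : ℝ) + 1) * h x + (x - a) * deriv h x) := by
      funext x
      have h1 : HasDerivAt (fun x : ℝ => (x - a) ^ (m + 1))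
          (((m : ℝ) + 1) * (x - a) ^ m * 1) x := by
        have := ((hasDerivAt_id x).sub_const a).fun_pow (m + 1)
        simpa using this
      have h2 : HasDerivAt h (deriv h x) x := (hdiff x).hasDerivAt
      have := (h1.fun_mul h2).deriv
      rw [this]
      ring
    rw [hderiv]
    exact ih m (by omega) _
      ((contDiff_const.mul hC).add
        ((contDiff_id.sub contDiff_const).mul hd))

/-- all derivatives of `σ₁` up to order `p - 1` vanish at `ρ = a₁`,
so the extension of `σ₁` by `0` for `ρ < a₁` is a `C^{p-1}` function (below the
outer PML boundary `a₁ + T`). -/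
theorem stmt_2 (p : ℕ) (hp : 2 ≤ p) (a₁ T S : ℝ)
    (ha₁ : 0 < a₁) (hT : 0 < T) (hS : 0 < S)
    (f₁ f₂ : ℝ → ℝ)
    (hf₁ : ∀ x : ℝ, f₁ x = (1/2 - 1/(p : ℝ)) * x ^ 3 + x / (p : ℝ) + 1/2)
    (hf₂ : ∀ x : ℝ, f₂ x = 1 - f₁ x)
    (σ₁ σext : ℝ → ℝ)
    (hσ₁ : ∀ ρ : ℝ, σ₁ ρ =
      2 * S * (f₁ ((ρ - (a₁ + T)) / T)) ^ p /
        ((f₁ ((ρ - (a₁ + T)) / T)) ^ p + (f₂ ((ρ - (a₁ + T)) / T)) ^ p))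
    (hσext : ∀ ρ : ℝ, σext ρ = if ρ < a₁ then 0 else σ₁ ρ) :
    (∀ k : ℕ, 1 ≤ k → k ≤ p - 1 → iteratedDeriv k σ₁ a₁ = 0) ∧
    ContDiffOn ℝ (p - 1 : ℕ) σext (Set.Iio (a₁ + T)) := by
  have hp0 : (p : ℝ) ≠ 0 := Nat.cast_ne_zero.mpr (by omega)
  have hT0 : T ≠ 0 := ne_of_gt hT
  set c : ℝ := 1/2 - 1/(p : ℝ) with hc
  -- the quadratic cofactor of `f₁`
  set q : ℝ → ℝ := fun x => c * x ^ 2 - c * x + 1/2 with hq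
  -- the (polynomial) value of `f₁` at the rescaled variable
  set t : ℝ → ℝ := fun ρ => c * ((ρ - (a₁ + T)) / T) ^ 3 + ((ρ - (a₁ + T)) / T) / (p : ℝ) + 1/2
    with htdef
  set D : ℝ → ℝ := fun ρ => t ρ ^ p + (1 - t ρ) ^ p with hD
  have hDpos : ∀ ρ : ℝ, 0 < D ρ := fun ρ => aux_den_pos p (by omega) (t ρ)
  set H : ℝ → ℝ := fun ρ => 2 * S * (q ((ρ - (a₁ + T)) / T) / T) ^ p / D ρ with hH
  have hf₁t : ∀ ρ : ℝ, f₁ ((ρ - (a₁ + T)) / T) = t ρ := fun ρ => by rw [hf₁]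
  have h12 : 1/2 - c = 1/(p : ℝ) := by rw [hc]; ring
  have hpoly : ∀ u : ℝ, c * u ^ 3 + u / (p : ℝ) + 1/2 = (u + 1) * (c * u ^ 2 - c * u + 1/2) := by
    intro u
    rw [div_eq_mul_one_div u (p : ℝ), ← h12]
    ring
  have hfactor : ∀ ρ : ℝ, t ρ = (ρ - a₁) * (q ((ρ - (a₁ + T)) / T) / T) := by
    intro ρ
    have hu : (ρ - (a₁ + T)) / T + 1 = (ρ - a₁) / T := by field_simp; ring
    calc t ρ = ((ρ - (a₁ + T)) / T + 1) * q ((ρ - (a₁ + T)) / T) := hpoly _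
      _ = (ρ - a₁) / T * q ((ρ - (a₁ + T)) / T) := by rw [hu]
      _ = (ρ - a₁) * (q ((ρ - (a₁ + T)) / T) / T) := by ring
  have hkey : ∀ ρ : ℝ, σ₁ ρ = (ρ - a₁) ^ p * H ρ := by
    intro ρ
    rw [hσ₁, hf₂, hf₁t, hH]
    simp only [hD]
    rw [hfactor ρ, mul_pow]
    ring
  -- smoothness of H
  have hlin : ContDiff ℝ ∞ (fun ρ : ℝ => (ρ - (a₁ + T)) / T) :=
    (contDiff_id.sub contDiff_const).div_const _
  have hqsm : ContDiff ℝ ∞ q := by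
    rw [hq]
    exact ((contDiff_const.mul (contDiff_id.pow 2)).sub (contDiff_const.mul contDiff_id)).add
      contDiff_const
  have htsm : ContDiff ℝ ∞ t := by
    rw [htdef]
    exact ((contDiff_const.mul (hlin.pow 3)).add (hlin.div_const _)).add contDiff_const
  have hDsm : ContDiff ℝ ∞ D := by
    rw [hD]
    exact (htsm.pow p).add ((contDiff_const.sub htsm).pow p)
  have hHsm : ContDiff ℝ ∞ H := by
    rw [hH]
    exact (contDiff_const.mul (((hqsm.comp hlin).div_const _).pow p)).div hDsm
      fun ρ => (hDpos ρ).ne'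
  constructor
  · intro k hk1 hk2
    have hσeq : σ₁ = fun ρ : ℝ => (ρ - a₁) ^ p * H ρ := funext hkey
    rw [hσeq]
    exact aux_vanish a₁ k p (by omega) H hHsm
  · have hσe : σext = fun ρ : ℝ => max (ρ - a₁) 0 ^ p * H ρ := by
      funext ρ
      rw [hσext]
      split_ifs with h
      · rw [max_eq_right (by linarith), zero_pow (by omega), zero_mul]
      · rw [max_eq_left (by linarith [not_lt.mp h]), hkey]
    rw [hσe]
    apply ContDiff.contDiffOn
    have hmax : ContDiff ℝ ((p - 1 : ℕ)) (fun x : ℝ => max x 0 ^ p) := by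
      have := aux_contDiff_maxpow (p - 1)
      rwa [show p - 1 + 1 = p by omega] at this
    have hcomp : ContDiff ℝ ((p - 1 : ℕ)) (fun ρ : ℝ => max (ρ - a₁) 0 ^ p) :=
      hmax.comp (contDiff_id.sub contDiff_const)
    exact hcomp.mul (hHsm.of_le (ENat.natCast_le_of_coe_top_le_withTop le_rfl _))
end

section
/- (Graded-mesh scaling function endpoint behavior) The scaling function s = ξ(t) = (s⁰ ξ₁^p + s¹ ξ₂^p)/(ξ₁^p + ξ₂^p), with ξ₁(ξ) = (1/2 − 1/p)ξ³ + ξ/p + 1/2, ξ₂ = 1 − ξ₁, ξ = (2t − (t⁰ + t¹))/(t¹ − t⁰), satisfies ξ(t⁰) = s⁰, ξ(t¹) = s¹, and its derivatives up to order p − 1 vanish at t = t⁰ and t = t¹. -/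
lemma denom_ne_zero (p : ℕ) (hp : 1 ≤ p) (a : ℝ) : a ^ p + (1 - a) ^ p ≠ 0 := by
  intro h
  rcases Nat.even_or_odd p with he | ho
  · have h1 : (0:ℝ) ≤ a ^ p := he.pow_nonneg a
    have h2 : (0:ℝ) ≤ (1 - a) ^ p := he.pow_nonneg (1 - a)
    have ha : a ^ p = 0 := by linarith
    have hb : (1 - a) ^ p = 0 := by linarith
    have ha' : a = 0 := (pow_eq_zero_iff (by omega)).mp ha
    have hb' : (1 - a) = 0 := (pow_eq_zero_iff (by omega)).mp hb
    rw [ha'] at hb'; norm_num at hb'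
  · have h' : (fun x : ℝ => x ^ p) a = (fun x : ℝ => x ^ p) (-(1 - a)) := by
      simp only [ho.neg_pow]; linarith
    have := (Odd.strictMono_pow (R := ℝ) ho).injective h'
    linarith

/-- Key lemma: iterated derivatives of `v ^ p * g` keep a factor `v ^ (p - k)`. -/
lemma key_factor (p : ℕ) (v g : ℝ → ℝ) (hv : ContDiff ℝ (⊤ : ℕ∞) v)
    (hg : ContDiff ℝ (⊤ : ℕ∞) g) :
    ∀ k, k ≤ p → ∃ h : ℝ → ℝ, ContDiff ℝ (⊤ : ℕ∞) h ∧
      deriv^[k] (fun t => v t ^ p * g t) = fun t => v t ^ (p - k) * h t := by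
  intro k
  induction k with
  | zero => intro _; exact ⟨g, hg, by simp⟩
  | succ k ih =>
    intro hk
    obtain ⟨h, hh, heq⟩ := ih (by omega)
    have hv' : ContDiff ℝ (⊤ : ℕ∞) (deriv v) := (contDiff_infty_iff_deriv.mp hv).2
    have hh' : ContDiff ℝ (⊤ : ℕ∞) (deriv h) := (contDiff_infty_iff_deriv.mp hh).2
    refine ⟨fun t => (p - k : ℕ) * deriv v t * h t + v t * deriv h t,
      by fun_prop, ?_⟩
    rw [Function.iterate_succ_apply', heq]
    funext t
    have hvd : DifferentiableAt ℝ v t := (hv.differentiable (by simp)) t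
    have hhd : DifferentiableAt ℝ h t := (hh.differentiable (by simp)) t
    have hvp : DifferentiableAt ℝ (fun t => v t ^ (p - k)) t := hvd.pow _
    rw [deriv_fun_mul hvp hhd, deriv_fun_pow hvd _]
    have h1 : p - k - 1 = p - (k + 1) := by omega
    have h2 : p - k = (p - (k + 1)) + 1 := by omega
    rw [h1, h2, pow_succ]
    ring

/-- graded-mesh scaling function endpoint behavior: the scaling
function `ξ` maps `t⁰ ↦ s⁰`, `t¹ ↦ s¹`, and its derivatives up to order
`p - 1` vanish at both endpoints. -/
theorem stmt_17 (p : ℕ) (hp : 2 ≤ p) (t0 t1 s0 s1 : ℝ)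
    (ht : t0 < t1) (hs : s0 < s1)
    (ξ₁ ξ₂ : ℝ → ℝ)
    (hξ₁ : ∀ x : ℝ, ξ₁ x = (1/2 - 1/(p : ℝ)) * x ^ 3 + x / (p : ℝ) + 1/2)
    (hξ₂ : ∀ x : ℝ, ξ₂ x = 1 - ξ₁ x)
    (ξ : ℝ → ℝ)
    (hξ : ∀ t : ℝ, ξ t =
      (s0 * (ξ₂ ((2 * t - (t0 + t1)) / (t1 - t0))) ^ p
        + s1 * (ξ₁ ((2 * t - (t0 + t1)) / (t1 - t0))) ^ p) /
      ((ξ₁ ((2 * t - (t0 + t1)) / (t1 - t0))) ^ p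
        + (ξ₂ ((2 * t - (t0 + t1)) / (t1 - t0))) ^ p)) :
    ξ t0 = s0 ∧ ξ t1 = s1 ∧
    (∀ k : ℕ, 1 ≤ k → k ≤ p - 1 →
      iteratedDeriv k ξ t0 = 0 ∧ iteratedDeriv k ξ t1 = 0) := by
  have htne : t1 - t0 ≠ 0 := by linarith
  have hpne : (p : ℝ) ≠ 0 := by positivity
  set u : ℝ → ℝ := fun t => (2 * t - (t0 + t1)) / (t1 - t0) with hu
  set w : ℝ → ℝ := fun t => ξ₁ (u t) with hwdef
  have hw : ∀ t, w t = (1/2 - 1/(p : ℝ)) * (u t) ^ 3 + u t / (p : ℝ) + 1/2 :=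
    fun t => hξ₁ (u t)
  have hu0 : u t0 = -1 := by
    show (2 * t0 - (t0 + t1)) / (t1 - t0) = -1
    rw [div_eq_iff htne]; ring
  have hu1 : u t1 = 1 := by
    show (2 * t1 - (t0 + t1)) / (t1 - t0) = 1
    rw [div_eq_iff htne]; ring
  have hw0 : w t0 = 0 := by rw [hw, hu0]; ring
  have hw1 : w t1 = 1 := by
    rw [hw, hu1]
    field_simp
    ring
  have hpne0 : p ≠ 0 := by omega
  have hD : ∀ t, w t ^ p + (1 - w t) ^ p ≠ 0 :=
    fun t => denom_ne_zero p (by omega) (w t)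
  -- rewrite ξ in terms of w
  have hξw : ∀ t, ξ t = (s0 * (1 - w t) ^ p + s1 * w t ^ p) /
      (w t ^ p + (1 - w t) ^ p) := by
    intro t
    rw [hξ t, hξ₂]
  -- endpoint values
  have hξ0 : ξ t0 = s0 := by
    rw [hξw, hw0]
    simp [zero_pow hpne0]
  have hξ1 : ξ t1 = s1 := by
    rw [hξw, hw1]
    simp [zero_pow hpne0]
  refine ⟨hξ0, hξ1, ?_⟩
  -- smoothness
  have huc : ContDiff ℝ (⊤ : ℕ∞) u := by
    have : u = fun t => (2 * t - (t0 + t1)) / (t1 - t0) := rfl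
    rw [this]
    exact ((contDiff_const.mul contDiff_id).sub contDiff_const).div_const _
  have hwc : ContDiff ℝ (⊤ : ℕ∞) w := by
    have : w = fun t => (1/2 - 1/(p : ℝ)) * (u t) ^ 3 + u t / (p : ℝ) + 1/2 :=
      funext hw
    rw [this]
    exact ((contDiff_const.mul (huc.pow 3)).add (huc.div_const _)).add contDiff_const
  have hDc : ContDiff ℝ (⊤ : ℕ∞) (fun t => w t ^ p + (1 - w t) ^ p) := by
    exact (hwc.pow p).add ((contDiff_const.sub hwc).pow p)
  intro k hk1 hkp
  have hkp' : k ≤ p := by omega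
  have main : ∀ (c d : ℝ) (v : ℝ → ℝ) (x : ℝ), ContDiff ℝ (⊤ : ℕ∞) v → v x = 0 →
      (∀ t, ξ t = c + v t ^ p * (d / (w t ^ p + (1 - w t) ^ p))) →
      iteratedDeriv k ξ x = 0 := by
    intro c d v x hvc hvx hdec
    have hGc : ContDiff ℝ (⊤ : ℕ∞) (fun t => d / (w t ^ p + (1 - w t) ^ p)) :=
      contDiff_const.div hDc hD
    obtain ⟨h, hh, heq⟩ := key_factor p v _ hvc hGc k hkp'
    obtain ⟨k', rfl⟩ : ∃ k', k = k' + 1 := ⟨k - 1, by omega⟩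
    have hξeq : ξ = fun t => c + v t ^ p * (d / (w t ^ p + (1 - w t) ^ p)) :=
      funext hdec
    rw [iteratedDeriv_eq_iterate, Function.iterate_succ_apply]
    have hderiv : deriv ξ = deriv (fun t => v t ^ p * (d / (w t ^ p + (1 - w t) ^ p))) := by
      funext t
      rw [hξeq]
      exact deriv_const_add c
    rw [hderiv, ← Function.iterate_succ_apply, Function.iterate_succ_apply'
      , ← Function.iterate_succ_apply' deriv k']
    rw [heq]
    simp only
    rw [hvx, zero_pow (by omega), zero_mul]
  constructor
  · apply main s0 (s1 - s0) w t0 hwc hw0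
    intro t
    rw [hξw t]
    field_simp [hD t]
    ring
  · apply main s1 (s0 - s1) (fun t => 1 - w t) t1 (contDiff_const.sub hwc)
      (by show 1 - w t1 = 0; rw [hw1]; ring)
    intro t
    rw [hξw t]
    field_simp [hD t]
    ring
end
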